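/- For all natural numbers a > 1, d > 0, and n ≥ 0, and all states encoded as words x, y ∈ {0,…,d−1}^n: there is a transition x →(b/c) y in the n-fold composition of the division-by-d transducer in base a if and only if [x] →(b/c) [y] is a transition of the division-by-d^n transducer in base a, where [x_0…x_{n−1}] = Σ_k x_k·d^k is the reverse base-d encoding of the word x. -/

import Mathlib

/-- Transition of the `n`-fold composition of the division-by-`d` transducer in
base `a`: states are words over `{0,…,d-1}`; there is a transition
`x →(b/c) y` iff there are intermediate digits chaining the component
transitions `x_k * a + b_k = b_{k+1} * d + y_k`. -/
def CompTrans (a d : ℕ) : List ℕ → ℕ → ℕ → List ℕ → Prop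
  | [], b, c, [] => b = c
  | x :: xs, b, c, y :: ys => ∃ e, e < a ∧ x * a + b = e * d + y ∧ CompTrans a d xs e c ys
  | _, _, _, _ => False

/-- Reverse base-`d` value (least significant digit first). -/
def revVal (d : ℕ) : List ℕ → ℕ
  | [] => 0
  | c :: w => c + d * revVal d w

theorem compTrans_iff (a d : ℕ) (ha : 1 < a) (hd : 0 < d)
    (x y : List ℕ) (hx : ∀ s ∈ x, s < d) (hy : ∀ s ∈ y, s < d)
    (hlen : x.length = y.length) (b c : ℕ) (hb : b < a) (hc : c < a) :
    CompTrans a d x b c y ↔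
      revVal d x * a + b = c * d ^ x.length + revVal d y := by
  induction x generalizing y b with
  | nil =>
    cases y with
    | nil => simp [CompTrans, revVal]
    | cons y ys => simp at hlen
  | cons x xs ih =>
    cases y with
    | nil => simp at hlen
    | cons y ys =>
      have hx0 : x < d := hx x List.mem_cons_self
      have hy0 : y < d := hy y List.mem_cons_self
      have hx' : ∀ s ∈ xs, s < d := fun s hs => hx s (List.mem_cons_of_mem _ hs)
      have hy' : ∀ s ∈ ys, s < d := fun s hs => hy s (List.mem_cons_of_mem _ hs)
      have hlen' : xs.length = ys.length := by simpa using hlen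
      simp only [CompTrans, revVal, List.length_cons]
      constructor
      · rintro ⟨e, he, heq, ht⟩
        have h2 := (ih ys hx' hy' hlen' e he).mp ht
        rw [pow_succ]
        zify at heq h2 ⊢
        linear_combination heq + d * h2
      · intro heq
        set X := revVal d xs with hX
        set Y := revVal d ys with hY
        set n := xs.length with hn
        have key : (x * a + b) + d * (X * a) = d * (c * d ^ n + Y) + y := by
          rw [pow_succ] at heq
          zify at heq ⊢
          linear_combination heq
        set L := x * a + b with hL
        have hmod : L % d = y := by
          have h1 : (L + d * (X * a)) % d = (d * (c * d ^ n + Y) + y) % d := by rw [key]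
          rw [Nat.add_mul_mod_self_left] at h1
          rw [Nat.mul_add_mod] at h1
          rw [h1, Nat.mod_eq_of_lt hy0]
        set e := L / d with he
        have hLe : L = e * d + y := by
          rw [he, mul_comm, ← hmod]
          exact (Nat.div_add_mod L d).symm
        have hea : e < a := by
          have hLlt : L < d * a := by
            have : x * a + b ≤ (d - 1) * a + (a - 1) := by
              have h1 : x ≤ d - 1 := by omega
              have h2 : b ≤ a - 1 := by omega
              exact Nat.add_le_add (Nat.mul_le_mul_right a h1) h2
            have : (d - 1) * a + (a - 1) < d * a := by
              have : 0 < a := by omega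
              cases d with
              | zero => omega
              | succ k => simp [Nat.succ_mul]; omega
            omega
          by_contra h
          push_neg at h
          have : d * a ≤ e * d := by
            rw [mul_comm]
            exact Nat.mul_le_mul_right d h
          omega
        have htail : X * a + e = c * d ^ n + Y := by
          have hcancel : d * (X * a + e) = d * (c * d ^ n + Y) := by
            have : e * d + y + d * (X * a) = d * (c * d ^ n + Y) + y := by
              rw [← hLe]; exact key
            zify at this ⊢
            linear_combination this
          exact Nat.eq_of_mul_eq_mul_left hd hcancel
        exact ⟨e, hea, hLe, (ih ys hx' hy' hlen' e hea).mpr htail⟩
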